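/- arXiv:2509.22219 — 2 statements merged into one kernel-verified Lean document; each statement's English description precedes it below -/
import Mathlib

section
/- Let A ∈ SO(3) with rows a₁ᵀ, a₂ᵀ, a₃ᵀ, and let Ψ : ℝ³ → ℝᵐ satisfy Ψ(Aᵀ R_z(t) A x) = Ψ(x) for all t ∈ ℝ and all x ∈ ℝ³. Then there exists a function φ : ℝ² → ℝᵐ such that Ψ(x) = φ((a₁·x)² + (a₂·x)², a₃·x) for all x ∈ ℝ³. -/
open Matrix

/-- `R(t)`: the 2×2 rotation matrix. -/
noncomputable def R2 (t : ℝ) : Matrix (Fin 2) (Fin 2) ℝ :=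
  !![Real.cos t, -Real.sin t; Real.sin t, Real.cos t]

/-- `R_z(t)`: rotation about the z-axis in ℝ³. -/
noncomputable def Rz (t : ℝ) : Matrix (Fin 3) (Fin 3) ℝ :=
  !![Real.cos t, -Real.sin t, 0;
     Real.sin t,  Real.cos t, 0;
     0,           0,          1]

/-- `SO n`: real n×n matrices with `AᵀA = 1` and `det A = 1`. -/
def SO (n : ℕ) : Set (Matrix (Fin n) (Fin n) ℝ) :=
  {A | Aᵀ * A = 1 ∧ A.det = 1}

lemma exists_rot (a b : ℝ) : ∃ t : ℝ,
    Real.cos t * a - Real.sin t * b = Real.sqrt (a ^ 2 + b ^ 2) ∧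
    Real.sin t * a + Real.cos t * b = 0 := by
  set z : ℂ := ⟨a, b⟩ with hz
  have habs : (‖z‖ : ℝ) = Real.sqrt (a ^ 2 + b ^ 2) := by
    rw [Complex.norm_def, Complex.normSq_mk]
    ring_nf
  have h2 : Complex.exp ((-z.arg : ℝ) * Complex.I) * z = (‖z‖ : ℝ) := by
    calc Complex.exp ((-z.arg : ℝ) * Complex.I) * z
        = Complex.exp ((-z.arg : ℝ) * Complex.I) *
            ((‖z‖ : ℝ) * Complex.exp ((z.arg : ℝ) * Complex.I)) := by
          rw [Complex.norm_mul_exp_arg_mul_I z]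
      _ = (‖z‖ : ℝ) *
            Complex.exp ((-z.arg : ℝ) * Complex.I + (z.arg : ℝ) * Complex.I) := by
          rw [Complex.exp_add]; ring
      _ = (‖z‖ : ℝ) := by
          have h0 : ((-z.arg : ℝ) : ℂ) * Complex.I + ((z.arg : ℝ) : ℂ) * Complex.I = 0 := by
            push_cast; ring
          rw [h0, Complex.exp_zero, mul_one]
  refine ⟨-z.arg, ?_, ?_⟩
  · have h : (Complex.exp ((-z.arg : ℝ) * Complex.I) * z).re
        = Real.cos (-z.arg) * a - Real.sin (-z.arg) * b := by
      rw [Complex.exp_mul_I]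
      simp [hz, Complex.add_re, Complex.mul_re, Complex.cos_ofReal_re,
        Complex.sin_ofReal_re]
      try ring
    rw [h2, Complex.ofReal_re, habs] at h
    exact h.symm
  · have h : (Complex.exp ((-z.arg : ℝ) * Complex.I) * z).im
        = Real.sin (-z.arg) * a + Real.cos (-z.arg) * b := by
      rw [Complex.exp_mul_I]
      simp [hz, Complex.add_im, Complex.mul_im, Complex.cos_ofReal_re,
        Complex.sin_ofReal_re]
      try ring
    rw [h2, Complex.ofReal_im] at h
    exact h.symm

/-- If `Ψ : ℝ³ → ℝᵐ` is invariant under `x ↦ Aᵀ R_z(t) A x` for all `t`,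
where `A ∈ SO(3)` has rows `a₁ᵀ, a₂ᵀ, a₃ᵀ`, then
`Ψ(x) = φ((a₁·x)² + (a₂·x)², a₃·x)` for some `φ : ℝ² → ℝᵐ`. -/
theorem stmt0 (m : ℕ) (A : Matrix (Fin 3) (Fin 3) ℝ) (hA : A ∈ SO 3)
    (Ψ : (Fin 3 → ℝ) → (Fin m → ℝ))
    (hΨ : ∀ (t : ℝ) (x : Fin 3 → ℝ), Ψ ((Aᵀ * Rz t * A).mulVec x) = Ψ x) :
    ∃ φ : ℝ × ℝ → (Fin m → ℝ),
      ∀ x : Fin 3 → ℝ, Ψ x = φ ((A 0 ⬝ᵥ x) ^ 2 + (A 1 ⬝ᵥ x) ^ 2, A 2 ⬝ᵥ x) := by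
  refine ⟨fun p => Ψ (Aᵀ.mulVec ![Real.sqrt p.1, 0, p.2]), fun x => ?_⟩
  set y : Fin 3 → ℝ := A.mulVec x with hy
  have hyi : ∀ i, A i ⬝ᵥ x = y i := fun i => rfl
  obtain ⟨t, ht1, ht2⟩ := exists_rot (y 0) (y 1)
  have key : (Rz t).mulVec y = ![Real.sqrt ((y 0) ^ 2 + (y 1) ^ 2), 0, y 2] := by
    funext i
    fin_cases i <;>
      simp [Rz, mulVec, dotProduct, Fin.sum_univ_three] <;> linarith
  calc Ψ x = Ψ ((Aᵀ * Rz t * A).mulVec x) := (hΨ t x).symm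
    _ = Ψ (Aᵀ.mulVec ((Rz t).mulVec y)) := by
        rw [hy, ← mulVec_mulVec, ← mulVec_mulVec]
    _ = _ := by rw [key, hyi, hyi, hyi]
end

section
/- For every real skew-symmetric 3×3 matrix B (i.e. Bᵀ = −B) there exist A ∈ SO(3) and λ ≥ 0 such that exp(tB) = Aᵀ R_z(tλ) A for all t ∈ ℝ. In particular, every one-parameter subgroup {exp(tB) : t ∈ ℝ} of SO(3) equals {Aᵀ R_z(s) A : s ∈ ℝ} for some A ∈ SO(3), or is trivial. -/
open Matrix NormedSpace

set_option maxHeartbeats 1000000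

/-- The infinitesimal generator of rotation about the z-axis. -/
def Lz : Matrix (Fin 3) (Fin 3) ℝ := !![0,-1,0;1,0,0;0,0,0]

/-- The algebra homomorphism from `ℂ × ℝ` to 3×3 matrices sending `(z, r)` to the
block matrix with the standard 2×2 real form of `z` and `r` in the corner. -/
noncomputable def Phi : (ℂ × ℝ) →ₐ[ℝ] Matrix (Fin 3) (Fin 3) ℝ where
  toFun p := !![p.1.re, -p.1.im, 0; p.1.im, p.1.re, 0; 0, 0, p.2]
  map_one' := by
    ext i j
    fin_cases i <;> fin_cases j <;> simp [Matrix.one_apply, Matrix.vecHead, Matrix.vecTail]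
  map_mul' p q := by
    ext i j
    fin_cases i <;> fin_cases j <;>
      simp [Matrix.mul_apply, Fin.sum_univ_three, Complex.mul_re, Complex.mul_im,
        Matrix.vecHead, Matrix.vecTail] <;> ring
  map_zero' := by
    ext i j
    fin_cases i <;> fin_cases j <;> simp [Matrix.vecHead, Matrix.vecTail]
  map_add' p q := by
    ext i j
    fin_cases i <;> fin_cases j <;> simp [Matrix.vecHead, Matrix.vecTail] <;> ring
  commutes' r := by
    ext i j
    fin_cases i <;> fin_cases j <;>
      simp [Matrix.algebraMap_matrix_apply, Matrix.vecHead, Matrix.vecTail]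

lemma Phi_cont : Continuous Phi := Phi.toLinearMap.continuous_of_finiteDimensional

/-- The exponential of `s • Lz` is the rotation `Rz s`. -/
lemma exp_smul_Lz (s : ℝ) : NormedSpace.exp (s • Lz) = Rz s := by
  have h1 : s • Lz = Phi ((⟨0, s⟩ : ℂ), (0 : ℝ)) := by
    ext i j
    fin_cases i <;> fin_cases j <;> simp [Lz, Phi, Matrix.vecHead, Matrix.vecTail]
  have h2 : NormedSpace.exp ((⟨0, s⟩ : ℂ), (0 : ℝ)) = ((⟨Real.cos s, Real.sin s⟩ : ℂ), (1 : ℝ)) := by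
    have hc : (⟨0, s⟩ : ℂ) = (s : ℂ) * Complex.I := by
      apply Complex.ext <;> simp
    have hfst : (NormedSpace.exp ((⟨0, s⟩ : ℂ), (0 : ℝ))).fst = (⟨Real.cos s, Real.sin s⟩ : ℂ) := by
      rw [Prod.fst_exp, ← Complex.exp_eq_exp_ℂ, hc,
        Complex.exp_mul_I]
      apply Complex.ext <;> simp [Complex.cos_ofReal_re, Complex.sin_ofReal_re]
    have hsnd : (NormedSpace.exp ((⟨0, s⟩ : ℂ), (0 : ℝ))).snd = (1 : ℝ) := by
      rw [Prod.snd_exp, exp_zero]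
    exact Prod.ext hfst hsnd
  letI : SeminormedRing (Matrix (Fin 3) (Fin 3) ℝ) := Matrix.linftyOpSemiNormedRing
  letI : NormedRing (Matrix (Fin 3) (Fin 3) ℝ) := Matrix.linftyOpNormedRing
  letI : NormedAlgebra ℝ (Matrix (Fin 3) (Fin 3) ℝ) := Matrix.linftyOpNormedAlgebra
  erw [h1, ← map_exp Phi Phi_cont, h2]
  ext i j
  fin_cases i <;> fin_cases j <;> simp [Phi, Rz]

/-- Conjugating an exponential. -/
lemma conj_exp {A B : Matrix (Fin 3) (Fin 3) ℝ} {lam : ℝ} (hA : A ∈ SO 3)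
    (h : A * B * Aᵀ = lam • Lz) (t : ℝ) : NormedSpace.exp (t • B) = Aᵀ * Rz (t * lam) * A := by
  obtain ⟨h1, _⟩ := hA
  have h1' : A * Aᵀ = 1 := mul_eq_one_comm.mp h1
  set U : (Matrix (Fin 3) (Fin 3) ℝ)ˣ := ⟨A, Aᵀ, h1', h1⟩ with hU
  have hBe : B = Aᵀ * (lam • Lz) * A := by
    rw [← h]
    calc B = (Aᵀ * A) * B * (Aᵀ * A) := by rw [h1, Matrix.one_mul, Matrix.mul_one]
    _ = Aᵀ * (A * B * Aᵀ) * A := by simp only [Matrix.mul_assoc]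
  have htB : t • B = Aᵀ * ((t * lam) • Lz) * A := by
    rw [hBe]
    rw [show Aᵀ * (lam • Lz) * A = lam • (Aᵀ * Lz * A) by
        simp [Matrix.mul_smul, Matrix.smul_mul],
      show Aᵀ * ((t*lam) • Lz) * A = (t*lam) • (Aᵀ * Lz * A) by
        simp [Matrix.mul_smul, Matrix.smul_mul], smul_smul]
  have hUinv : (↑U⁻¹ : Matrix (Fin 3) (Fin 3) ℝ) = Aᵀ := rfl
  have hkey := Matrix.exp_units_conj' U ((t * lam) • Lz)
  rw [hUinv] at hkey
  rw [show (U : Matrix (Fin 3) (Fin 3) ℝ) = A from rfl] at hkey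
  rw [htB, hkey, exp_smul_Lz]

/-- The main construction, nondegenerate case: conjugating a skew-symmetric matrix into
normal form by a special orthogonal matrix. -/
lemma exists_conj_main (a b c ρ lam : ℝ) (hρ0 : ρ ≠ 0) (hlam0 : lam ≠ 0)
    (hρ2 : ρ^2 = a^2+b^2) (hlam2 : lam^2 = a^2+b^2+c^2) :
    ∃ A ∈ SO 3, A * !![0,-c,b;c,0,-a;-b,a,0] * Aᵀ = lam • Lz := by
  set M : Matrix (Fin 3) (Fin 3) ℝ := !![-b, a, 0; -(c*a), -(c*b), ρ^2; a, b, c] with hM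
  set Dv : Fin 3 → ℝ := ![ρ⁻¹, (lam*ρ)⁻¹, lam⁻¹] with hDv
  set A : Matrix (Fin 3) (Fin 3) ℝ := Matrix.diagonal Dv * M with hA
  have hMMT : M * Mᵀ = Matrix.diagonal ![ρ^2, ρ^2*lam^2, lam^2] := by
    ext i j
    fin_cases i <;> fin_cases j <;>
      simp [hM, Matrix.mul_apply, Fin.sum_univ_three, Matrix.diagonal,
        Matrix.vecHead, Matrix.vecTail] <;>
      first
        | ring1
        | linear_combination -hρ2
        | linear_combination -hlam2
        | linear_combination c*hρ2
        | linear_combination (ρ^2-c^2)*hρ2 - ρ^2*hlam2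
  have hdetM : M.det = ρ^2 * lam^2 := by
    rw [Matrix.det_fin_three]
    simp [hM, Matrix.vecHead, Matrix.vecTail]
    linear_combination (-(c^2))*hρ2 - ρ^2*hlam2
  have hMBMT : M * !![0,-c,b;c,0,-a;-b,a,0] * Mᵀ
      = !![0, -(lam^2*ρ^2), 0; lam^2*ρ^2, 0, 0; 0, 0, 0] := by
    ext i j
    fin_cases i <;> fin_cases j <;>
      simp [hM, Matrix.mul_apply, Fin.sum_univ_three,
        Matrix.vecHead, Matrix.vecTail] <;>
      first
        | ring1
        | linear_combination c^2*hρ2 + ρ^2*hlam2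
        | linear_combination -(c^2)*hρ2 - ρ^2*hlam2
  have hAT : Aᵀ = Mᵀ * Matrix.diagonal Dv := by
    rw [hA, Matrix.transpose_mul, Matrix.diagonal_transpose]
  have hAAT : A * Aᵀ = 1 := by
    rw [hA, hAT]
    calc diagonal Dv * M * (Mᵀ * diagonal Dv)
        = diagonal Dv * (M * Mᵀ) * diagonal Dv := by
          simp only [Matrix.mul_assoc]
      _ = 1 := by
          rw [hMMT, Matrix.diagonal_mul_diagonal, Matrix.diagonal_mul_diagonal]
          rw [show (fun i => Dv i * ![ρ^2, ρ^2*lam^2, lam^2] i * Dv i) = fun _ => (1:ℝ) by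
            funext i
            fin_cases i <;>
              simp [hDv, Matrix.vecHead, Matrix.vecTail] <;> field_simp <;> ring]
          exact Matrix.diagonal_one
  refine ⟨A, ⟨mul_eq_one_comm.mp hAAT, ?_⟩, ?_⟩
  · rw [hA, Matrix.det_mul, Matrix.det_diagonal, hdetM]
    simp [hDv, Fin.prod_univ_three, Matrix.vecHead, Matrix.vecTail]
    field_simp
  · rw [hA, hAT]
    have : diagonal Dv * M * !![0,-c,b;c,0,-a;-b,a,0] * (Mᵀ * diagonal Dv)
        = diagonal Dv * (M * !![0,-c,b;c,0,-a;-b,a,0] * Mᵀ) * diagonal Dv := by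
      simp only [Matrix.mul_assoc]
    rw [this, hMBMT]
    ext i j
    fin_cases i <;> fin_cases j <;>
      simp [Lz, Matrix.mul_apply, Fin.sum_univ_three, Matrix.diagonal, hDv,
        Matrix.vecHead, Matrix.vecTail] <;>
      field_simp <;> ring

/-- The main construction, all cases. -/
lemma exists_conj (a b c : ℝ) :
    ∃ A ∈ SO 3, A * !![0,-c,b;c,0,-a;-b,a,0] * Aᵀ = Real.sqrt (a^2+b^2+c^2) • Lz := by
  by_cases hab : a = 0 ∧ b = 0
  · obtain ⟨ha, hb⟩ := hab
    subst ha hb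
    rcases le_or_gt 0 c with hc | hc
    · refine ⟨1, ⟨by simp, by simp⟩, ?_⟩
      have hs : Real.sqrt (0^2+0^2+c^2) = c := by
        rw [show (0:ℝ)^2+0^2+c^2 = c^2 by ring, Real.sqrt_sq hc]
      rw [hs]
      ext i j
      fin_cases i <;> fin_cases j <;>
        simp [Lz, Matrix.vecHead, Matrix.vecTail]
    · refine ⟨!![1,0,0;0,-1,0;0,0,-1], ⟨?_, ?_⟩, ?_⟩
      · ext i j
        fin_cases i <;> fin_cases j <;>
          simp [Matrix.mul_apply, Fin.sum_univ_three, Matrix.one_apply,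
            Matrix.vecHead, Matrix.vecTail]
      · simp [Matrix.det_fin_three, Matrix.vecHead, Matrix.vecTail]
      · have hs : Real.sqrt (0^2+0^2+c^2) = -c := by
          rw [show (0:ℝ)^2+0^2+c^2 = (-c)^2 by ring, Real.sqrt_sq (by linarith)]
        rw [hs]
        ext i j
        fin_cases i <;> fin_cases j <;>
          simp [Lz, Matrix.mul_apply, Fin.sum_univ_three, Matrix.vecHead, Matrix.vecTail]
  · have hab2 : 0 < a^2 + b^2 := by
      rcases not_and_or.mp hab with h | h <;> positivity
    have habc2 : 0 < a^2+b^2+c^2 := by nlinarith [sq_nonneg c]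
    exact exists_conj_main a b c (Real.sqrt (a^2+b^2)) (Real.sqrt (a^2+b^2+c^2))
      (Real.sqrt_pos.mpr hab2).ne' (Real.sqrt_pos.mpr habc2).ne'
      (Real.sq_sqrt hab2.le) (Real.sq_sqrt habc2.le)

lemma Rz_zero : Rz 0 = 1 := by
  ext i j
  fin_cases i <;> fin_cases j <;>
    simp [Rz, Matrix.one_apply, Matrix.vecHead, Matrix.vecTail]

/-- For every real skew-symmetric 3×3 matrix `B` there exist `A ∈ SO(3)` and
`λ ≥ 0` with `exp(tB) = Aᵀ R_z(tλ) A` for all `t`. In particular the one-parameter subgroup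
`{exp(tB) : t ∈ ℝ}` equals `{Aᵀ R_z(s) A : s ∈ ℝ}` for some `A ∈ SO(3)`, or is trivial. -/
theorem stmt2 (B : Matrix (Fin 3) (Fin 3) ℝ) (hB : Bᵀ = -B) :
    (∃ A ∈ SO 3, ∃ lam : ℝ, 0 ≤ lam ∧
        ∀ t : ℝ, NormedSpace.exp (t • B) = Aᵀ * Rz (t * lam) * A) ∧
      ((∃ A ∈ SO 3,
          {G : Matrix (Fin 3) (Fin 3) ℝ | ∃ t : ℝ, G = NormedSpace.exp (t • B)} =
            {G : Matrix (Fin 3) (Fin 3) ℝ | ∃ s : ℝ, G = Aᵀ * Rz s * A}) ∨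
        {G : Matrix (Fin 3) (Fin 3) ℝ | ∃ t : ℝ, G = NormedSpace.exp (t • B)} = {1}) := by
  set a := B 2 1 with ha
  set b := B 0 2 with hb
  set c := B 1 0 with hc
  have hskew : ∀ i j, B j i = -(B i j) := by
    intro i j
    have := congr_fun (congr_fun hB i) j
    simpa [Matrix.transpose_apply] using this
  have hBform : B = !![0,-c,b;c,0,-a;-b,a,0] := by
    ext i j
    fin_cases i <;> fin_cases j <;>
      simp [ha, hb, hc, Matrix.vecHead, Matrix.vecTail] <;>
      first
        | rfl
        | linarith [hskew 0 0]
        | linarith [hskew 1 1]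
        | linarith [hskew 2 2]
        | linarith [hskew 1 0]
        | linarith [hskew 0 2]
        | linarith [hskew 2 1]
  set lam := Real.sqrt (a^2+b^2+c^2) with hlam
  obtain ⟨A, hASO, hconj⟩ := exists_conj a b c
  rw [← hBform] at hconj
  rw [← hlam] at hconj
  have hmain : ∀ t : ℝ, NormedSpace.exp (t • B) = Aᵀ * Rz (t * lam) * A := conj_exp hASO hconj
  have hlamnn : 0 ≤ lam := Real.sqrt_nonneg _
  refine ⟨⟨A, hASO, lam, hlamnn, hmain⟩, ?_⟩
  rcases eq_or_lt_of_le hlamnn with hlam0 | hlampos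
  · right
    ext G
    simp only [Set.mem_setOf_eq, Set.mem_singleton_iff]
    constructor
    · rintro ⟨t, rfl⟩
      rw [hmain t, ← hlam0, mul_zero, Rz_zero, Matrix.mul_one, hASO.1]
    · rintro rfl
      exact ⟨0, by rw [hmain 0, zero_mul, Rz_zero, Matrix.mul_one, hASO.1]⟩
  · left
    refine ⟨A, hASO, ?_⟩
    ext G
    simp only [Set.mem_setOf_eq]
    constructor
    · rintro ⟨t, rfl⟩
      exact ⟨t * lam, hmain t⟩
    · rintro ⟨s, rfl⟩
      refine ⟨s / lam, ?_⟩
      rw [hmain (s / lam), div_mul_cancel₀ _ hlampos.ne']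
end
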